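/- In Theorem 1, the constructed ordering <_X satisfies 1 <_X x_1 <_X ... <_X x_m <_X h_1 <_X ... <_X h_n <_X z, where z = z_G = z_H; moreover z is <_X-positive cofinal and <_X is right invariant under multiplication by z. -/

import Mathlib

/-- `P` is the positive cone of a left ordering of `G`. -/
def IsLeftOrderPositiveCone {G : Type} [Group G] (P : Set G) : Prop :=
  ∃ r : G → G → Prop, IsStrictTotalOrder G r ∧
    (∀ a b c : G, r a b → r (c * a) (c * b)) ∧ P = {g : G | r 1 g}

/-- `X`, together with `ιG` and `ιH`, is the amalgamated free product
`G *_{⟨zG = zH⟩} H`, characterized by its universal property. -/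
structure IsAmalgamatedProduct {G H X : Type} [Group G] [Group H] [Group X]
    (zG : G) (zH : H) (ιG : G →* X) (ιH : H →* X) : Prop where
  eq : ιG zG = ιH zH
  ind : ∀ {K : Type} [Group K] (f : G →* K) (f' : H →* K), f zG = f' zH →
      ∃! φ : X →* K, φ.comp ιG = f ∧ φ.comp ιH = f'

theorem chain_cofinal_right_invariant
    {G H X : Type} [Group G] [Group H] [Group X]
    [LinearOrder G] [LinearOrder H]
    (hG : ∀ a b c : G, a < b → c * a < c * b)
    (hH : ∀ a b c : H, a < b → c * a < c * b)
    (zG : G) (zH : H) (hzG : zG ≠ 1) (hzH : zH ≠ 1)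
    (hcen : ∀ a : G, zG * a = a * zG)
    (m n : ℕ) (g : Fin (m + 1) → G) (h : Fin (n + 1) → H)
    (hgmono : StrictMono g) (hhmono : StrictMono h)
    (hgcone : {a : G | 1 < a} = (Subsemigroup.closure (Set.range g) : Set G))
    (hhcone : {a : H | 1 < a} = (Subsemigroup.closure (Set.range h) : Set H))
    (hCFG : ∀ i, g i < zG) (hCFH : ∀ j, h j < zH)
    (hINV : ∀ a b : H, a < b → a * zH < b * zH)
    (ιG : G →* X) (ιH : H →* X)
    (ham : IsAmalgamatedProduct zG zH ιG ιH)
    :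
    let x : Fin (m + 1) → X := fun i => ιG (g i) * (ιH zH)⁻¹ * ιH (h 0)
    let PX : Subsemigroup X :=
      Subsemigroup.closure (Set.range x ∪ Set.range (fun j => ιH (h j)))
    let ltX : X → X → Prop := fun a b => a⁻¹ * b ∈ PX
    (∀ i, ltX 1 (x i)) ∧
    (∀ i j, i < j → ltX (x i) (x j)) ∧
    (∀ i j, ltX (x i) (ιH (h j))) ∧
    (∀ i j, i < j → ltX (ιH (h i)) (ιH (h j))) ∧
    (∀ j, ltX (ιH (h j)) (ιH zH)) ∧
    ltX 1 (ιH zH) ∧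
    (∀ y : X, ∃ k K : ℤ, ltX (ιH zH ^ k) y ∧ ltX y (ιH zH ^ K)) ∧
    (∀ a b : X, ltX a b → ltX (a * ιH zH) (b * ιH zH)) := by
  intro x PX ltX
  have hxdef : ∀ i, x i = ιG (g i) * (ιH zH)⁻¹ * ιH (h 0) := fun _ => rfl
  -- positivity transfer
  have hposG : ∀ {a : G}, 1 < a → a ∈ Subsemigroup.closure (Set.range g) := by
    intro a ha
    have : a ∈ {b : G | 1 < b} := ha
    rw [hgcone] at this; exact this
  have hGpos : ∀ {a : G}, a ∈ Subsemigroup.closure (Set.range g) → 1 < a := by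
    intro a ha
    have : a ∈ (Subsemigroup.closure (Set.range g) : Set G) := ha
    rw [← hgcone] at this; exact this
  have hposH : ∀ {a : H}, 1 < a → a ∈ Subsemigroup.closure (Set.range h) := by
    intro a ha
    have : a ∈ {b : H | 1 < b} := ha
    rw [hhcone] at this; exact this
  have hHpos : ∀ {a : H}, a ∈ Subsemigroup.closure (Set.range h) → 1 < a := by
    intro a ha
    have : a ∈ (Subsemigroup.closure (Set.range h) : Set H) := ha
    rw [← hhcone] at this; exact this
  have hgk : ∀ k, (1 : G) < g k := fun k => hGpos (Subsemigroup.subset_closure ⟨k, rfl⟩)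
  have hhk : ∀ k, (1 : H) < h k := fun k => hHpos (Subsemigroup.subset_closure ⟨k, rfl⟩)
  have hzG1 : (1 : G) < zG := lt_trans (hgk 0) (hCFG 0)
  have hzH1 : (1 : H) < zH := lt_trans (hhk 0) (hCFH 0)
  -- the conjugation map on H is strictly monotone
  have hφ : StrictMono (fun a : H => zH⁻¹ * a * zH) := by
    intro a b hab
    have := hH _ _ zH⁻¹ (hINV _ _ hab)
    simpa [mul_assoc] using this
  have hφlt : ∀ a b : H, zH⁻¹ * a * zH < zH⁻¹ * b * zH ↔ a < b := fun a b => hφ.lt_iff_lt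
  have hφle : ∀ a b : H, zH⁻¹ * a * zH ≤ zH⁻¹ * b * zH ↔ a ≤ b := fun a b => hφ.le_iff_le
  -- h 0 is the minimum of the positive cone of H
  have hmin : ∀ b ∈ Subsemigroup.closure (Set.range h), h 0 ≤ b := by
    intro b hb
    induction hb using Subsemigroup.closure_induction with
    | mem y hy =>
      obtain ⟨j, rfl⟩ := hy
      exact hhmono.monotone (Fin.zero_le j)
    | mul y w hy hw ihy ihw =>
      have h1w : (1 : H) < w := hHpos hw
      have : y < y * w := by simpa using hH _ _ y h1w
      exact le_of_lt (lt_of_le_of_lt ihy this)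
  -- zH commutes with h 0
  have hzh0 : zH * h 0 = h 0 * zH := by
    have p1 : (1 : H) < zH⁻¹ * h 0 * zH := by
      have := (hφlt 1 (h 0)).mpr (hhk 0)
      simpa using this
    have e2 : zH⁻¹ * (zH * h 0 * zH⁻¹) * zH = h 0 := by group
    have e1 : zH⁻¹ * 1 * zH = 1 := by group
    have p2 : (1 : H) < zH * h 0 * zH⁻¹ := by
      refine (hφlt 1 (zH * h 0 * zH⁻¹)).mp ?_
      rw [e2, e1]
      exact hhk 0
    have l1 : h 0 ≤ zH⁻¹ * h 0 * zH := hmin _ (hposH p1)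
    have l2 : h 0 ≤ zH * h 0 * zH⁻¹ := hmin _ (hposH p2)
    have l3 : zH⁻¹ * h 0 * zH ≤ h 0 := by
      have := (hφle (h 0) (zH * h 0 * zH⁻¹)).mpr l2
      rwa [e2] at this
    have e : zH⁻¹ * h 0 * zH = h 0 := le_antisymm l3 l1
    have := congrArg (fun a => zH * a) e
    simp only [← mul_assoc, mul_inv_cancel, one_mul] at this
    exact this.symm
  -- commutation facts in X
  have hzcomm_g : ∀ a : G, Commute (ιH zH) (ιG a) := by
    intro a
    have e : ιG (zG * a) = ιG (a * zG) := by rw [hcen]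
    simp only [map_mul, ham.eq] at e
    exact e
  have hzcomm_h0 : Commute (ιH zH) (ιH (h 0)) := by
    have e : ιH (zH * h 0) = ιH (h 0 * zH) := by rw [hzh0]
    simp only [map_mul] at e
    exact e
  have cx : ∀ i, Commute (ιH zH) (x i) := by
    intro i
    rw [hxdef i]
    exact ((hzcomm_g (g i)).mul_right (Commute.refl (ιH zH)).inv_right).mul_right hzcomm_h0
  -- basic PX membership
  have hxmem : ∀ i, x i ∈ PX := fun i =>
    Subsemigroup.subset_closure (Or.inl ⟨i, rfl⟩)
  have hhmem : ∀ j, ιH (h j) ∈ PX := fun j =>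
    Subsemigroup.subset_closure (Or.inr ⟨j, rfl⟩)
  have hHPX : ∀ b : H, 1 < b → ιH b ∈ PX := by
    intro b hb
    induction hposH hb using Subsemigroup.closure_induction with
    | mem y hy => obtain ⟨j, rfl⟩ := hy; exact hhmem j
    | mul y w hy hw ihy ihw => rw [map_mul]; exact mul_mem (ihy (hHpos hy)) (ihw (hHpos hw))
  have hzPX : ιH zH ∈ PX := hHPX zH hzH1
  have hz1 : (1 : H) < (h 0)⁻¹ * zH := by
    have := hH _ _ (h 0)⁻¹ (hCFH 0)
    simpa using this
  have hGPX : ∀ a : G, 1 < a → ιG a ∈ PX := by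
    intro a ha
    induction hposG ha using Subsemigroup.closure_induction with
    | mem y hy =>
      obtain ⟨k, rfl⟩ := hy
      have e : ιG (g k) = x k * ιH ((h 0)⁻¹ * zH) := by
        rw [hxdef k]; simp only [map_mul, map_inv]; group
      rw [e]; exact mul_mem (hxmem k) (hHPX _ hz1)
    | mul y w hy hw ihy ihw => rw [map_mul]; exact mul_mem (ihy (hGpos hy)) (ihw (hGpos hw))
  -- conjugates of positive G-elements by E := ιH ((h 0)⁻¹ * zH) lie in PX
  have hconjG : ∀ a : G, 1 < a →
      ιH ((h 0)⁻¹ * zH) * ιG a * (ιH ((h 0)⁻¹ * zH))⁻¹ ∈ PX := by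
    intro a ha
    induction hposG ha using Subsemigroup.closure_induction with
    | mem y hy =>
      obtain ⟨k, rfl⟩ := hy
      have e : ιH ((h 0)⁻¹ * zH) * ιG (g k) * (ιH ((h 0)⁻¹ * zH))⁻¹
          = ιH ((h 0)⁻¹ * zH) * x k := by
        rw [hxdef k]; simp only [map_mul, map_inv]; group
      rw [e]; exact mul_mem (hHPX _ hz1) (hxmem k)
    | mul y w hy hw ihy ihw =>
      have e : ιH ((h 0)⁻¹ * zH) * ιG (y * w) * (ιH ((h 0)⁻¹ * zH))⁻¹
          = (ιH ((h 0)⁻¹ * zH) * ιG y * (ιH ((h 0)⁻¹ * zH))⁻¹)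
            * (ιH ((h 0)⁻¹ * zH) * ιG w * (ιH ((h 0)⁻¹ * zH))⁻¹) := by
        simp only [map_mul]; group
      rw [e]; exact mul_mem (ihy (hGpos hy)) (ihw (hGpos hw))
  -- conjugation of PX by ιH zH, both directions
  have hconjz : ∀ w ∈ PX, (ιH zH)⁻¹ * w * ιH zH ∈ PX := by
    intro w hw
    induction hw using Subsemigroup.closure_induction with
    | mem y hy =>
      rcases hy with ⟨i, rfl⟩ | ⟨j, rfl⟩
      · have e : (ιH zH)⁻¹ * x i * ιH zH = x i := by
          rw [mul_assoc, ← (cx i).eq]; group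
        rw [e]; exact hxmem i
      · show (ιH zH)⁻¹ * ιH (h j) * ιH zH ∈ PX
        have e : (ιH zH)⁻¹ * ιH (h j) * ιH zH = ιH (zH⁻¹ * h j * zH) := by
          simp only [map_mul, map_inv]
        rw [e]
        refine hHPX _ ?_
        have := (hφlt 1 (h j)).mpr (hhk j)
        simpa using this
    | mul y w' hy hw' ihy ihw' =>
      have e : (ιH zH)⁻¹ * (y * w') * ιH zH
          = ((ιH zH)⁻¹ * y * ιH zH) * ((ιH zH)⁻¹ * w' * ιH zH) := by group
      rw [e]; exact mul_mem ihy ihw'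
  have hconjz' : ∀ w ∈ PX, ιH zH * w * (ιH zH)⁻¹ ∈ PX := by
    intro w hw
    induction hw using Subsemigroup.closure_induction with
    | mem y hy =>
      rcases hy with ⟨i, rfl⟩ | ⟨j, rfl⟩
      · have e : ιH zH * x i * (ιH zH)⁻¹ = x i := by
          rw [(cx i).eq]; group
        rw [e]; exact hxmem i
      · show ιH zH * ιH (h j) * (ιH zH)⁻¹ ∈ PX
        have e : ιH zH * ιH (h j) * (ιH zH)⁻¹ = ιH (zH * h j * zH⁻¹) := by
          simp only [map_mul, map_inv]
        rw [e]
        refine hHPX _ ?_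
        refine (hφlt 1 (zH * h j * zH⁻¹)).mp ?_
        have e2 : zH⁻¹ * (zH * h j * zH⁻¹) * zH = h j := by group
        have e1 : zH⁻¹ * 1 * zH = 1 := by group
        rw [e2, e1]
        exact hhk j
    | mul y w' hy hw' ihy ihw' =>
      have e : ιH zH * (y * w') * (ιH zH)⁻¹
          = (ιH zH * y * (ιH zH)⁻¹) * (ιH zH * w' * (ιH zH)⁻¹) := by group
      rw [e]; exact mul_mem ihy ihw'
  have hconjzpow : ∀ (t : ℤ) (w : X), w ∈ PX → ιH zH ^ t * w * (ιH zH ^ t)⁻¹ ∈ PX := by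
    intro t
    induction t using Int.induction_on with
    | zero => intro w hw; simpa using hw
    | succ k ih =>
      intro w hw
      have e : ιH zH ^ ((k : ℤ) + 1) * w * (ιH zH ^ ((k : ℤ) + 1))⁻¹
          = ιH zH * (ιH zH ^ (k : ℤ) * w * (ιH zH ^ (k : ℤ))⁻¹) * (ιH zH)⁻¹ := by group
      rw [e]; exact hconjz' _ (ih w hw)
    | pred k ih =>
      intro w hw
      have e : ιH zH ^ (-(k : ℤ) - 1) * w * (ιH zH ^ (-(k : ℤ) - 1))⁻¹
          = (ιH zH)⁻¹ * (ιH zH ^ (-(k : ℤ)) * w * (ιH zH ^ (-(k : ℤ)))⁻¹) * ιH zH := by group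
      rw [e]; exact hconjz _ (ih w hw)
  -- upper bounds by powers of zG in G
  have hzpowG : ∀ a : G, ∃ r : ℕ, a < zG ^ r := by
    intro a
    rcases le_or_gt a 1 with ha | ha
    · exact ⟨1, lt_of_le_of_lt ha (by simpa using hzG1)⟩
    · induction hposG ha using Subsemigroup.closure_induction with
      | mem y hy =>
        obtain ⟨k, rfl⟩ := hy
        exact ⟨1, by simpa using hCFG k⟩
      | mul y w hy hw ihy ihw =>
        obtain ⟨r1, hr1⟩ := ihy (hGpos hy)
        obtain ⟨r2, hr2⟩ := ihw (hGpos hw)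
        refine ⟨r1 + r2, ?_⟩
        have czy : Commute zG y := hcen y
        calc y * w < y * zG ^ r2 := hG _ _ y hr2
          _ = zG ^ r2 * y := ((czy.pow_left r2).eq).symm
          _ < zG ^ r2 * zG ^ r1 := hG _ _ _ hr1
          _ = zG ^ (r1 + r2) := by rw [← pow_add, Nat.add_comm]
  -- right multiplication by powers of zH preserves < in H
  have hINVpow : ∀ a b : H, a < b → ∀ r : ℕ, a * zH ^ r < b * zH ^ r := by
    intro a b hab r
    induction r with
    | zero => simpa using hab
    | succ r ih => simpa [pow_succ, ← mul_assoc] using hINV _ _ ih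
  have hzpowH : ∀ b : H, ∃ r : ℕ, b < zH ^ r := by
    intro b
    rcases le_or_gt b 1 with hb | hb
    · exact ⟨1, lt_of_le_of_lt hb (by simpa using hzH1)⟩
    · induction hposH hb using Subsemigroup.closure_induction with
      | mem y hy =>
        obtain ⟨k, rfl⟩ := hy
        exact ⟨1, by simpa using hCFH k⟩
      | mul y w hy hw ihy ihw =>
        obtain ⟨r1, hr1⟩ := ihy (hHpos hy)
        obtain ⟨r2, hr2⟩ := ihw (hHpos hw)
        refine ⟨r1 + r2, ?_⟩
        calc y * w < y * zH ^ r2 := hH _ _ y hr2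
          _ < zH ^ r1 * zH ^ r2 := hINVpow _ _ hr1 r2
          _ = zH ^ (r1 + r2) := by rw [← pow_add]
  have hUBG : ∀ a : G, ∃ K : ℤ, (ιG a)⁻¹ * ιH zH ^ K ∈ PX := by
    intro a
    obtain ⟨r, hr⟩ := hzpowG a
    refine ⟨(r : ℤ), ?_⟩
    have e : (ιG a)⁻¹ * ιH zH ^ (r : ℤ) = ιG (a⁻¹ * zG ^ r) := by
      rw [map_mul, map_inv, map_pow, ham.eq, zpow_natCast]
    rw [e]
    exact hGPX _ (by have := hG _ _ a⁻¹ hr; simpa using this)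
  have hUBH : ∀ b : H, ∃ K : ℤ, (ιH b)⁻¹ * ιH zH ^ K ∈ PX := by
    intro b
    obtain ⟨r, hr⟩ := hzpowH b
    refine ⟨(r : ℤ), ?_⟩
    have e : (ιH b)⁻¹ * ιH zH ^ (r : ℤ) = ιH (b⁻¹ * zH ^ r) := by
      rw [map_mul, map_inv, map_pow, zpow_natCast]
    rw [e]
    exact hHPX _ (by have := hH _ _ b⁻¹ hr; simpa using this)
  -- the subgroup of elements bounded by powers of z
  let Sgrp : Subgroup X :=
    { carrier := {y : X | (∃ k : ℤ, (ιH zH ^ k)⁻¹ * y ∈ PX) ∧ ∃ K : ℤ, y⁻¹ * ιH zH ^ K ∈ PX}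
      one_mem' := by
        constructor
        · refine ⟨-1, ?_⟩
          have e : (ιH zH ^ (-1 : ℤ))⁻¹ * 1 = ιH zH := by group
          rw [e]; exact hzPX
        · refine ⟨1, ?_⟩
          have e : (1 : X)⁻¹ * ιH zH ^ (1 : ℤ) = ιH zH := by group
          rw [e]; exact hzPX
      mul_mem' := by
        rintro a b ⟨⟨k1, hk1⟩, ⟨K1, hK1⟩⟩ ⟨⟨k2, hk2⟩, ⟨K2, hK2⟩⟩
        constructor
        · refine ⟨k1 + k2, ?_⟩
          have e : (ιH zH ^ (k1 + k2))⁻¹ * (a * b)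
              = (ιH zH ^ (-k2) * ((ιH zH ^ k1)⁻¹ * a) * (ιH zH ^ (-k2))⁻¹)
                * ((ιH zH ^ k2)⁻¹ * b) := by group
          rw [e]; exact mul_mem (hconjzpow (-k2) _ hk1) hk2
        · refine ⟨K1 + K2, ?_⟩
          have e : (a * b)⁻¹ * ιH zH ^ (K1 + K2)
              = (b⁻¹ * ιH zH ^ K2)
                * (ιH zH ^ (-K2) * (a⁻¹ * ιH zH ^ K1) * (ιH zH ^ (-K2))⁻¹) := by group
          rw [e]; exact mul_mem hK2 (hconjzpow (-K2) _ hK1)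
      inv_mem' := by
        rintro a ⟨⟨k, hk⟩, ⟨K, hK⟩⟩
        constructor
        · refine ⟨-K, ?_⟩
          have e : (ιH zH ^ (-K : ℤ))⁻¹ * a⁻¹
              = ιH zH ^ K * (a⁻¹ * ιH zH ^ K) * (ιH zH ^ K)⁻¹ := by group
          rw [e]; exact hconjzpow K _ hK
        · refine ⟨-k, ?_⟩
          have e : (a⁻¹)⁻¹ * ιH zH ^ (-k : ℤ)
              = ιH zH ^ k * ((ιH zH ^ k)⁻¹ * a) * (ιH zH ^ k)⁻¹ := by group
          rw [e]; exact hconjzpow k _ hk }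
  have hsub : (Set.range ιG ∪ Set.range ιH : Set X) ⊆ ↑Sgrp := by
    rintro y (⟨a, rfl⟩ | ⟨b, rfl⟩)
    · obtain ⟨K', hK'⟩ := hUBG a⁻¹
      have hK'' : ιG a * ιH zH ^ K' ∈ PX := by rwa [map_inv, inv_inv] at hK'
      refine ⟨⟨-K', ?_⟩, hUBG a⟩
      have e : (ιH zH ^ (-K' : ℤ))⁻¹ * ιG a
          = ιH zH ^ K' * (ιG a * ιH zH ^ K') * (ιH zH ^ K')⁻¹ := by group
      rw [e]; exact hconjzpow K' _ hK''
    · obtain ⟨K', hK'⟩ := hUBH b⁻¹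
      have hK'' : ιH b * ιH zH ^ K' ∈ PX := by rwa [map_inv, inv_inv] at hK'
      refine ⟨⟨-K', ?_⟩, hUBH b⟩
      have e : (ιH zH ^ (-K' : ℤ))⁻¹ * ιH b
          = ιH zH ^ K' * (ιH b * ιH zH ^ K') * (ιH zH ^ K')⁻¹ := by group
      rw [e]; exact hconjzpow K' _ hK''
  -- X is generated by the images of G and H
  have htop : ∀ y : X, y ∈ Subgroup.closure (Set.range ιG ∪ Set.range ιH) := by
    set Kc := Subgroup.closure (Set.range ιG ∪ Set.range ιH) with hKc
    have hGmem : ∀ a : G, ιG a ∈ Kc := fun a => Subgroup.subset_closure (Or.inl ⟨a, rfl⟩)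
    have hHmem : ∀ b : H, ιH b ∈ Kc := fun b => Subgroup.subset_closure (Or.inr ⟨b, rfl⟩)
    obtain ⟨φ, ⟨hφG, hφH⟩, -⟩ :=
      ham.ind (ιG.codRestrict Kc hGmem) (ιH.codRestrict Kc hHmem) (Subtype.ext ham.eq)
    obtain ⟨ψ, -, huniq⟩ := ham.ind ιG ιH ham.eq
    have h1 : Kc.subtype.comp φ = MonoidHom.id X := by
      refine (huniq _ ⟨?_, ?_⟩).trans (huniq (MonoidHom.id X) ⟨?_, ?_⟩).symm
      · rw [MonoidHom.comp_assoc, hφG]; exact MonoidHom.ext fun _ => rfl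
      · rw [MonoidHom.comp_assoc, hφH]; exact MonoidHom.ext fun _ => rfl
      · exact MonoidHom.id_comp ιG
      · exact MonoidHom.id_comp ιH
    intro y
    have e : Kc.subtype (φ y) = y := by
      rw [← MonoidHom.comp_apply, h1]; rfl
    exact e ▸ (φ y).2
  -- assemble everything
  refine ⟨?_, ?_, ?_, ?_, ?_, ?_, ?_, ?_⟩
  · intro i
    show (1 : X)⁻¹ * x i ∈ PX
    simpa using hxmem i
  · intro i j hij
    show (x i)⁻¹ * x j ∈ PX
    have hpos : (1 : G) < (g i)⁻¹ * g j := by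
      have := hG _ _ (g i)⁻¹ (hgmono hij); simpa using this
    have e : (x i)⁻¹ * x j
        = ιH ((h 0)⁻¹ * zH) * ιG ((g i)⁻¹ * g j) * (ιH ((h 0)⁻¹ * zH))⁻¹ := by
      rw [hxdef i, hxdef j]; simp only [map_mul, map_inv]; group
    rw [e]; exact hconjG _ hpos
  · intro i j
    show (x i)⁻¹ * ιH (h j) ∈ PX
    have hq : (1 : G) < (g i)⁻¹ * zG := by
      have := hG _ _ (g i)⁻¹ (hCFG i); simpa using this
    have e : (x i)⁻¹ * ιH (h j)
        = (ιH ((h 0)⁻¹ * zH) * ιG ((g i)⁻¹ * zG) * (ιH ((h 0)⁻¹ * zH))⁻¹)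
          * ιH ((h 0)⁻¹ * h j) := by
      rw [hxdef i]; simp only [map_mul, map_inv, ham.eq]; group
    rw [e]
    rcases eq_or_lt_of_le (Fin.zero_le j) with hj | hj
    · rw [← hj]; simpa using hconjG _ hq
    · refine mul_mem (hconjG _ hq) (hHPX _ ?_)
      have := hH _ _ (h 0)⁻¹ (hhmono hj); simpa using this
  · intro i j hij
    show (ιH (h i))⁻¹ * ιH (h j) ∈ PX
    rw [← map_inv, ← map_mul]
    refine hHPX _ ?_
    have := hH _ _ (h i)⁻¹ (hhmono hij); simpa using this
  · intro j
    show (ιH (h j))⁻¹ * ιH zH ∈ PX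
    rw [← map_inv, ← map_mul]
    refine hHPX _ ?_
    have := hH _ _ (h j)⁻¹ (hCFH j); simpa using this
  · show (1 : X)⁻¹ * ιH zH ∈ PX
    simpa using hzPX
  · intro y
    have hy : (∃ k : ℤ, (ιH zH ^ k)⁻¹ * y ∈ PX) ∧ ∃ K : ℤ, y⁻¹ * ιH zH ^ K ∈ PX :=
      (Subgroup.closure_le Sgrp).mpr hsub (htop y)
    obtain ⟨⟨k, hk⟩, ⟨K, hK⟩⟩ := hy
    exact ⟨k, K, hk, hK⟩
  · intro a b hab
    show (a * ιH zH)⁻¹ * (b * ιH zH) ∈ PX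
    have e : (a * ιH zH)⁻¹ * (b * ιH zH) = (ιH zH)⁻¹ * (a⁻¹ * b) * ιH zH := by group
    rw [e]
    exact hconjz _ hab
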